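/- Let p ≥ 1 be a natural number, let D be a symmetric positive-definite real p×p matrix, let c > 0 be real, and let q be a real number with 2q > p. Then the function ξ ↦ (c² + ξᵀDξ)^{−q} is integrable on ℝ^p and ∫_{ℝ^p} (c² + ξᵀDξ)^{−q} dξ = c^{p − 2q} · π^{p/2} · Γ(q − p/2)/(Γ(q) · √(det D)). -/

import Mathlib

open MeasureTheory Real Matrix

lemma aux_gamma_scaled {q b : ℝ} (hq : 0 < q) (hb : 0 < b) :
    ∫ t in Set.Ioi (0:ℝ), t ^ (q-1) * rexp (-b * t) = b ^ (-q) * Gamma q := by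
  have h := integral_rpow_mul_exp_neg_mul_rpow (p := 1) (q := q - 1) (b := b)
    one_pos (by linarith) hb
  simp only [rpow_one] at h
  rw [h]
  norm_num

lemma aux_gamma_scaled_integrable {q b : ℝ} (hq : 0 < q) (hb : 0 < b) :
    IntegrableOn (fun t : ℝ => t ^ (q-1) * rexp (-b * t)) (Set.Ioi 0) := by
  have h := integrableOn_rpow_mul_exp_neg_mul_rpow (p := 1) (s := q - 1) (b := b)
    (by linarith) one_pos hb
  simpa only [rpow_one] using h

lemma aux_gaussian_integrable (p : ℕ) {t : ℝ} (ht : 0 < t) :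
    Integrable (fun x : EuclideanSpace ℝ (Fin p) => rexp (-t * ‖x‖^2)) := by
  have h := (GaussianFourier.integrable_cexp_neg_mul_sq_norm_add
    (V := EuclideanSpace ℝ (Fin p)) (b := (t : ℂ)) (by simpa using ht) 0 0).norm
  refine h.congr (Filter.Eventually.of_forall fun x => ?_)
  simp [Complex.norm_exp, ← Complex.ofReal_pow]

lemma aux_euclidean (p : ℕ) (q : ℝ) (hq : (p:ℝ) < 2 * q) :
    Integrable (fun x : EuclideanSpace ℝ (Fin p) => (1 + ‖x‖^2) ^ (-q)) ∧
    ∫ x : EuclideanSpace ℝ (Fin p), (1 + ‖x‖^2) ^ (-q)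
      = π ^ ((p:ℝ)/2) * Gamma (q - (p:ℝ)/2) / Gamma q := by
  have hq0 : 0 < q := by
    have : (0:ℝ) ≤ p := Nat.cast_nonneg p
    linarith
  have hq2 : 0 < q - (p:ℝ)/2 := by linarith
  have hΓ : (0:ℝ) < Gamma q := Real.Gamma_pos_of_pos hq0
  have hΓ2 : (0:ℝ) < Gamma (q - (p:ℝ)/2) := Real.Gamma_pos_of_pos hq2
  have hb : ∀ x : EuclideanSpace ℝ (Fin p), 0 < 1 + ‖x‖^2 := fun x => by positivity
  have hint : Integrable (fun x : EuclideanSpace ℝ (Fin p) => (1 + ‖x‖^2) ^ (-q)) := by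
    have h := integrable_rpow_neg_one_add_norm_sq (E := EuclideanSpace ℝ (Fin p))
      (μ := volume) (r := 2*q)
      (by simpa [finrank_euclideanSpace] using hq)
    refine h.congr (Filter.Eventually.of_forall fun x => ?_)
    rw [show -(2*q)/2 = -q by ring]
  refine ⟨hint, ?_⟩
  have hcont : Continuous fun x : EuclideanSpace ℝ (Fin p) => (1 + ‖x‖^2) ^ (-q) :=
    (continuous_const.add ((continuous_norm).pow 2)).rpow_const (fun x => Or.inl (hb x).ne')
  have step1 : ∀ x : EuclideanSpace ℝ (Fin p),
      ENNReal.ofReal (Gamma q) * ENNReal.ofReal ((1 + ‖x‖^2) ^ (-q))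
      = ∫⁻ t in Set.Ioi (0:ℝ), ENNReal.ofReal (t ^ (q-1) * rexp (-(1 + ‖x‖^2) * t)) := by
    intro x
    have hae : 0 ≤ᵐ[volume.restrict (Set.Ioi (0:ℝ))]
        fun t => t ^ (q-1) * rexp (-(1 + ‖x‖^2) * t) := by
      filter_upwards [ae_restrict_mem measurableSet_Ioi] with t ht
      have : (0:ℝ) < t := ht
      positivity
    rw [← ofReal_integral_eq_lintegral_ofReal (aux_gamma_scaled_integrable hq0 (hb x)) hae,
      aux_gamma_scaled hq0 (hb x), ← ENNReal.ofReal_mul (Real.Gamma_pos_of_pos hq0).le,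
      mul_comm]
  have hmeas : Measurable (fun z : (EuclideanSpace ℝ (Fin p)) × ℝ =>
      ENNReal.ofReal (z.2 ^ (q-1) * rexp (-(1 + ‖z.1‖^2) * z.2))) := by
    apply Measurable.ennreal_ofReal
    fun_prop
  have key : (ENNReal.ofReal (Gamma q))
        * ∫⁻ x : EuclideanSpace ℝ (Fin p), ENNReal.ofReal ((1 + ‖x‖^2) ^ (-q))
      = ENNReal.ofReal (π ^ ((p:ℝ)/2) * Gamma (q - (p:ℝ)/2)) := by
    calc ENNReal.ofReal (Gamma q)
          * ∫⁻ x : EuclideanSpace ℝ (Fin p), ENNReal.ofReal ((1 + ‖x‖^2) ^ (-q))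
        = ∫⁻ x : EuclideanSpace ℝ (Fin p),
            ENNReal.ofReal (Gamma q) * ENNReal.ofReal ((1 + ‖x‖^2) ^ (-q)) :=
          (lintegral_const_mul' _ _ ENNReal.ofReal_ne_top).symm
      _ = ∫⁻ x : EuclideanSpace ℝ (Fin p), ∫⁻ t in Set.Ioi (0:ℝ),
            ENNReal.ofReal (t ^ (q-1) * rexp (-(1 + ‖x‖^2) * t)) :=
          lintegral_congr step1
      _ = ∫⁻ t in Set.Ioi (0:ℝ), ∫⁻ x : EuclideanSpace ℝ (Fin p),
            ENNReal.ofReal (t ^ (q-1) * rexp (-(1 + ‖x‖^2) * t)) :=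
          lintegral_lintegral_swap hmeas.aemeasurable
      _ = ∫⁻ t in Set.Ioi (0:ℝ),
            ENNReal.ofReal (π ^ ((p:ℝ)/2) * (rexp (-t) * t ^ ((q - (p:ℝ)/2) - 1))) := by
          refine setLIntegral_congr_fun measurableSet_Ioi
            (fun t ht => ?_)
          have ht : (0:ℝ) < t := ht
          have h1 : ∀ x : EuclideanSpace ℝ (Fin p), t ^ (q-1) * rexp (-(1 + ‖x‖^2) * t)
              = (t ^ (q-1) * rexp (-t)) * rexp (-t * ‖x‖^2) := by
            intro x
            rw [mul_assoc, ← Real.exp_add]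
            ring_nf
          simp_rw [h1]
          have hc1 : (0:ℝ) ≤ t ^ (q-1) * rexp (-t) := by positivity
          simp_rw [ENNReal.ofReal_mul hc1]
          rw [lintegral_const_mul' _ _ ENNReal.ofReal_ne_top]
          have h2 : ∫⁻ x : EuclideanSpace ℝ (Fin p), ENNReal.ofReal (rexp (-t * ‖x‖^2))
              = ENNReal.ofReal ((π / t) ^ ((p:ℝ)/2)) := by
            rw [← ofReal_integral_eq_lintegral_ofReal (aux_gaussian_integrable p ht)
              (Filter.Eventually.of_forall fun x => (Real.exp_pos _).le)]
            rw [GaussianFourier.integral_rexp_neg_mul_sq_norm ht]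
            norm_num [finrank_euclideanSpace]
          rw [h2, ← ENNReal.ofReal_mul hc1]
          congr 1
          rw [Real.div_rpow pi_pos.le ht.le, div_eq_mul_inv, ← Real.rpow_neg ht.le,
            show (q - (p:ℝ)/2) - 1 = (q-1) + (-((p:ℝ)/2)) by ring, Real.rpow_add ht]
          ring
      _ = ENNReal.ofReal (π ^ ((p:ℝ)/2) * Gamma (q - (p:ℝ)/2)) := by
          simp_rw [ENNReal.ofReal_mul (by positivity : (0:ℝ) ≤ π ^ ((p:ℝ)/2))]
          rw [lintegral_const_mul' _ _ ENNReal.ofReal_ne_top]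
          have hae : 0 ≤ᵐ[volume.restrict (Set.Ioi (0:ℝ))]
              fun t => rexp (-t) * t ^ ((q - (p:ℝ)/2) - 1) := by
            filter_upwards [ae_restrict_mem measurableSet_Ioi] with t ht
            have : (0:ℝ) < t := ht
            positivity
          rw [← ofReal_integral_eq_lintegral_ofReal (Real.GammaIntegral_convergent hq2) hae,
            ← Real.Gamma_eq_integral hq2]
  have hK : ∫⁻ x : EuclideanSpace ℝ (Fin p), ENNReal.ofReal ((1 + ‖x‖^2) ^ (-q))
      = ENNReal.ofReal (π ^ ((p:ℝ)/2) * Gamma (q - (p:ℝ)/2) / Gamma q) := by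
    rw [ENNReal.ofReal_div_of_pos hΓ]
    rw [ENNReal.eq_div_iff (ENNReal.ofReal_pos.2 hΓ).ne' ENNReal.ofReal_ne_top]
    exact key
  rw [MeasureTheory.integral_eq_lintegral_of_nonneg_ae
    (Filter.Eventually.of_forall fun x => by positivity) hcont.aestronglyMeasurable, hK,
    ENNReal.toReal_ofReal]
  positivity
lemma aux_pi (p : ℕ) (q : ℝ) (hq : (p:ℝ) < 2 * q) :
    Integrable (fun y : Fin p → ℝ => (1 + y ⬝ᵥ y) ^ (-q)) ∧
    ∫ y : Fin p → ℝ, (1 + y ⬝ᵥ y) ^ (-q)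
      = π ^ ((p:ℝ)/2) * Gamma (q - (p:ℝ)/2) / Gamma q := by
  have hA := aux_euclidean p q hq
  have hmp := EuclideanSpace.volume_preserving_symm_measurableEquiv_toLp (Fin p)
  have hcomp : ∀ x : EuclideanSpace ℝ (Fin p),
      (1 + (MeasurableEquiv.toLp 2 (Fin p → ℝ)).symm x ⬝ᵥ (MeasurableEquiv.toLp 2 (Fin p → ℝ)).symm x) ^ (-q)
        = (1 + ‖x‖^2) ^ (-q) := by
    intro x
    congr 2
    rw [EuclideanSpace.norm_eq, Real.sq_sqrt (by positivity)]
    simp [dotProduct, MeasurableEquiv.coe_toLp_symm, sq]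
  constructor
  · rw [← hmp.integrable_comp_emb (MeasurableEquiv.measurableEmbedding _)
      (g := fun y : Fin p → ℝ => (1 + y ⬝ᵥ y) ^ (-q))]
    exact hA.1.congr (Filter.Eventually.of_forall fun x => (hcomp x).symm)
  · rw [← hmp.integral_comp (MeasurableEquiv.measurableEmbedding _)
      (fun y : Fin p → ℝ => (1 + y ⬝ᵥ y) ^ (-q))]
    rw [← hA.2]
    exact integral_congr_ae (Filter.Eventually.of_forall hcomp)


lemma aux_comp_mulVec {p : ℕ} (M : Matrix (Fin p) (Fin p) ℝ) (hM : M.det ≠ 0)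
    {f : (Fin p → ℝ) → ℝ} (hf : AEStronglyMeasurable f (volume : Measure (Fin p → ℝ))) :
    (Integrable (fun y : Fin p → ℝ => f (M.mulVec y)) ↔ Integrable f) ∧
    ∫ y : Fin p → ℝ, f (M.mulVec y) = |M.det|⁻¹ * ∫ x : Fin p → ℝ, f x := by
  have hdet : LinearMap.det (Matrix.toLin' M) = M.det := LinearMap.det_toLin' M
  have hdet' : LinearMap.det (Matrix.toLin' M) ≠ 0 := by rw [hdet]; exact hM
  have hmap : Measure.map (Matrix.toLin' M) volume
      = ENNReal.ofReal |(M.det)⁻¹| • volume := by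
    rw [Measure.map_linearMap_addHaar_eq_smul_addHaar volume hdet', hdet]
  have hL : Continuous (Matrix.toLin' M) := LinearMap.continuous_of_finiteDimensional _
  have hsm : AEStronglyMeasurable f (Measure.map (Matrix.toLin' M) volume) := by
    rw [hmap]; exact hf.mono_ac Measure.smul_absolutelyContinuous
  have hco : (fun y : Fin p → ℝ => f (M.mulVec y)) = f ∘ (Matrix.toLin' M) := by
    funext y; simp [Function.comp, Matrix.toLin'_apply]
  have hc0 : ENNReal.ofReal |(M.det)⁻¹| ≠ 0 :=
    (ENNReal.ofReal_pos.2 (abs_pos.2 (inv_ne_zero hM))).ne'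
  constructor
  · rw [hco, ← integrable_map_measure hsm hL.measurable.aemeasurable, hmap,
      integrable_smul_measure hc0 ENNReal.ofReal_ne_top]
  · calc ∫ y : Fin p → ℝ, f (M.mulVec y)
        = ∫ x, f x ∂(Measure.map (Matrix.toLin' M) volume) := by
          rw [integral_map hL.measurable.aemeasurable hsm]; simp only [Matrix.toLin'_apply]
    _ = |M.det|⁻¹ * ∫ x, f x := by
          rw [hmap, integral_smul_measure, ENNReal.toReal_ofReal (abs_nonneg _), abs_inv,
            smul_eq_mul]

/-- For a symmetric positive-definite `p×p` real matrix `D`, `c > 0` and `2q > p`,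
the function `ξ ↦ (c² + ξᵀDξ)^{−q}` is integrable on `ℝ^p` and
`∫ (c² + ξᵀDξ)^{−q} dξ = c^{p−2q}·π^{p/2}·Γ(q − p/2)/(Γ(q)·√(det D))`. -/
theorem integral_quadratic_form_rpow (p : ℕ) (hp : 1 ≤ p)
    (D : Matrix (Fin p) (Fin p) ℝ) (hDsymm : D.IsSymm) (hDpos : D.PosDef)
    (c : ℝ) (hc : 0 < c) (q : ℝ) (hq : (p : ℝ) < 2 * q) :
    Integrable (fun ξ : Fin p → ℝ => (c ^ 2 + ξ ⬝ᵥ D.mulVec ξ) ^ (-q)) ∧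
    (∫ ξ : Fin p → ℝ, (c ^ 2 + ξ ⬝ᵥ D.mulVec ξ) ^ (-q))
      = c ^ ((p : ℝ) - 2 * q) * π ^ ((p : ℝ) / 2) * Gamma (q - (p : ℝ) / 2)
          / (Gamma q * Real.sqrt D.det) := by
  have hq0 : 0 < q := by
    have : (0:ℝ) ≤ p := Nat.cast_nonneg p
    linarith
  have hΓ : (0:ℝ) < Gamma q := Real.Gamma_pos_of_pos hq0
  have hdetD : (0:ℝ) < D.det := hDpos.det_pos
  obtain ⟨S, hSsymm, hSS⟩ : ∃ S : Matrix (Fin p) (Fin p) ℝ, Sᵀ = S ∧ S * S = D := by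
    open scoped MatrixOrder in
    refine ⟨CFC.sqrt D, ?_, CFC.sqrt_mul_sqrt_self D (Matrix.nonneg_iff_posSemidef.2 hDpos.posSemidef)⟩
    have h := (Matrix.nonneg_iff_posSemidef.1 (CFC.sqrt_nonneg D)).1.eq
    rwa [Matrix.conjTranspose_eq_transpose_of_trivial] at h
  have hdetS2 : S.det * S.det = D.det := by rw [← Matrix.det_mul, hSS]
  have hdetS : S.det ≠ 0 := by
    intro h; rw [h, zero_mul] at hdetS2; exact hdetD.ne hdetS2
  have hSunit : IsUnit S.det := isUnit_iff_ne_zero.2 hdetS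
  have habs : |S.det| = Real.sqrt D.det := by
    rw [← hdetS2, ← sq, Real.sqrt_sq_eq_abs]
  set M := c • S⁻¹ with hMdef
  have hdetM : M.det = c ^ p * S.det⁻¹ := by
    rw [hMdef, Matrix.det_smul, Matrix.det_nonsing_inv, Ring.inverse_eq_inv']
    simp
  have hMdet0 : M.det ≠ 0 := by
    rw [hdetM]
    exact mul_ne_zero (pow_ne_zero p hc.ne') (inv_ne_zero hdetS)
  -- the quadratic form composed with M
  have hquad : ∀ y : Fin p → ℝ, (M.mulVec y) ⬝ᵥ D.mulVec (M.mulVec y) = c^2 * (y ⬝ᵥ y) := by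
    intro y
    have h1 : M.mulVec y = c • (S⁻¹.mulVec y) := by
      rw [hMdef, Matrix.smul_mulVec]
    have h2 : D.mulVec (S⁻¹.mulVec y) = S.mulVec y := by
      rw [Matrix.mulVec_mulVec, ← hSS, Matrix.mul_assoc, Matrix.mul_nonsing_inv _ hSunit,
        Matrix.mul_one]
    have h3 : (S⁻¹.mulVec y) ⬝ᵥ S.mulVec y = y ⬝ᵥ y := by
      rw [Matrix.dotProduct_mulVec, ← Matrix.mulVec_transpose, hSsymm,
        Matrix.mulVec_mulVec, Matrix.mul_nonsing_inv _ hSunit, Matrix.one_mulVec]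
    rw [h1, smul_dotProduct, Matrix.mulVec_smul, dotProduct_smul,
      h2, h3, smul_eq_mul, smul_eq_mul, ← mul_assoc, ← sq]
  have hyy : ∀ y : Fin p → ℝ, 0 ≤ y ⬝ᵥ y := fun y =>
    Finset.sum_nonneg fun i _ => mul_self_nonneg _
  have hfun : ∀ y : Fin p → ℝ,
      (c^2 + (M.mulVec y) ⬝ᵥ D.mulVec (M.mulVec y)) ^ (-q)
        = c ^ (-(2*q)) * (1 + y ⬝ᵥ y) ^ (-q) := by
    intro y
    rw [hquad y, show c^2 + c^2 * (y ⬝ᵥ y) = c^2 * (1 + y ⬝ᵥ y) by ring,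
      Real.mul_rpow (by positivity) (by have := hyy y; linarith),
      show (c^2 : ℝ) = c ^ (2:ℝ) by rw [← Real.rpow_natCast c 2]; norm_num,
      ← Real.rpow_mul hc.le, show (2:ℝ) * -q = -(2*q) by ring]
  -- positivity and continuity of the integrand
  have hQnonneg : ∀ ξ : Fin p → ℝ, 0 ≤ ξ ⬝ᵥ D.mulVec ξ := by
    intro ξ
    rcases eq_or_ne ξ 0 with h | h
    · simp [h]
    · have h2 := hDpos.dotProduct_mulVec_pos h
      simpa using h2.le
  have hbase : ∀ ξ : Fin p → ℝ, 0 < c^2 + ξ ⬝ᵥ D.mulVec ξ := fun ξ =>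
    add_pos_of_pos_of_nonneg (by positivity) (hQnonneg ξ)
  have hcontQ : Continuous fun ξ : Fin p → ℝ => ξ ⬝ᵥ D.mulVec ξ := by
    simp only [dotProduct, Matrix.mulVec]
    fun_prop
  have hfcont : Continuous fun ξ : Fin p → ℝ => (c^2 + ξ ⬝ᵥ D.mulVec ξ) ^ (-q) :=
    (continuous_const.add hcontQ).rpow_const fun ξ => Or.inl (hbase ξ).ne'
  obtain ⟨hiff, hval⟩ := aux_comp_mulVec M hMdet0 hfcont.aestronglyMeasurable
  obtain ⟨hgint, hgval⟩ := aux_pi p q hq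
  have hcompint : Integrable (fun y : Fin p → ℝ =>
      (c^2 + (M.mulVec y) ⬝ᵥ D.mulVec (M.mulVec y)) ^ (-q)) := by
    have h := hgint.const_mul (c ^ (-(2*q)))
    exact h.congr (Filter.Eventually.of_forall fun y => (hfun y).symm)
  refine ⟨hiff.1 hcompint, ?_⟩
  have h2 : ∫ y : Fin p → ℝ, (c^2 + (M.mulVec y) ⬝ᵥ D.mulVec (M.mulVec y)) ^ (-q)
      = c ^ (-(2*q)) * (π ^ ((p:ℝ)/2) * Gamma (q - (p:ℝ)/2) / Gamma q) := by
    rw [integral_congr_ae (Filter.Eventually.of_forall hfun),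
      MeasureTheory.integral_const_mul, hgval]
  have habsM : |M.det| = c ^ p / Real.sqrt D.det := by
    rw [hdetM, abs_mul, abs_inv, habs, abs_of_pos (pow_pos hc p), div_eq_mul_inv]
  have habsMne : |M.det| ≠ 0 := abs_ne_zero.2 hMdet0
  have hmain : ∫ ξ : Fin p → ℝ, (c ^ 2 + ξ ⬝ᵥ D.mulVec ξ) ^ (-q)
      = |M.det| * (c ^ (-(2*q)) * (π ^ ((p:ℝ)/2) * Gamma (q - (p:ℝ)/2) / Gamma q)) := by
    rw [← h2, hval, ← mul_assoc, mul_inv_cancel₀ habsMne, one_mul]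
  rw [hmain, habsM]
  have hsq : Real.sqrt D.det ≠ 0 := by positivity
  have hcp : (c:ℝ) ^ p * c ^ (-(2*q)) = c ^ ((p:ℝ) - 2*q) := by
    rw [← Real.rpow_natCast c p, ← Real.rpow_add hc, show (p:ℝ) + -(2*q) = (p:ℝ) - 2*q by ring]
  field_simp
  rw [← hcp]
  ring
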